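/- The contact distance CDF of a Thomas cluster process, F_{R_C}(r) = 1 − exp(−2πλ_p ∫₀^∞ (1 − exp(−m̄(1 − Q₁(v/σ, r/σ)))) v dv), is upper bounded by 1 − exp(−πλ_p m̄ r²) for all r ≥ 0. -/

import Mathlib

open Real MeasureTheory Set
open scoped ENNReal NNReal
open ProbabilityTheory

noncomputable def besselI0 (x : ℝ) : ℝ :=
  (1 / Real.pi) * ∫ θ in (0:ℝ)..Real.pi, Real.exp (x * Real.cos θ)

noncomputable def ricePDF (σ ν u : ℝ) : ℝ :=
  (u / σ ^ 2) * Real.exp (-(u ^ 2 + ν ^ 2) / (2 * σ ^ 2)) * besselI0 (u * ν / σ ^ 2)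

noncomputable def marcumQ (α β : ℝ) : ℝ :=
  ∫ y in Set.Ioi β, y * Real.exp (-(y ^ 2 + α ^ 2) / 2) * besselI0 (α * y)

noncomputable def rayleighPDF (σ v : ℝ) : ℝ :=
  (v / σ ^ 2) * Real.exp (-v ^ 2 / (2 * σ ^ 2))

@[fun_prop]
lemma besselI0_continuous : Continuous besselI0 := by
  unfold besselI0
  exact continuous_const.mul
    (intervalIntegral.continuous_parametric_intervalIntegral_of_continuous' (by fun_prop) _ _)

lemma besselI0_nonneg (x : ℝ) : 0 ≤ besselI0 x := by
  unfold besselI0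
  have h1 : (0:ℝ) ≤ 1 / Real.pi := by positivity
  refine mul_nonneg h1 (intervalIntegral.integral_nonneg Real.pi_pos.le ?_)
  intro θ _
  positivity

lemma ricePDF_continuous (σ : ℝ) : Continuous fun p : ℝ × ℝ => ricePDF σ p.1 p.2 := by
  unfold ricePDF
  fun_prop

lemma ricePDF_nonneg (σ ν u : ℝ) (hu : 0 ≤ u) (hσ : 0 < σ) : 0 ≤ ricePDF σ ν u := by
  unfold ricePDF
  have := besselI0_nonneg (u * ν / σ ^ 2)
  positivity

lemma integral_exp_cos (a : ℝ) :
    ∫ θ in (-Real.pi)..Real.pi, Real.exp (a * Real.cos θ) = 2 * Real.pi * besselI0 a := by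
  have hcont : ∀ b c : ℝ, IntervalIntegrable (fun θ => Real.exp (a * Real.cos θ)) volume b c :=
    fun b c => (by fun_prop : Continuous fun θ => Real.exp (a * Real.cos θ)).intervalIntegrable b c
  have hsplit := intervalIntegral.integral_add_adjacent_intervals (a := -Real.pi) (b := 0)
    (c := Real.pi) (hcont _ _) (hcont _ _)
  have hneg : ∫ θ in (-Real.pi)..(0:ℝ), Real.exp (a * Real.cos θ)
      = ∫ θ in (0:ℝ)..Real.pi, Real.exp (a * Real.cos θ) := by
    have := intervalIntegral.integral_comp_neg (a := (0:ℝ)) (b := Real.pi)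
      (fun θ => Real.exp (a * Real.cos θ))
    simp only [Real.cos_neg, neg_zero] at this
    rw [← this]
  have hb : besselI0 a = (1 / Real.pi) * ∫ θ in (0:ℝ)..Real.pi, Real.exp (a * Real.cos θ) := rfl
  rw [← hsplit, hneg, hb]
  field_simp
  ring

lemma gauss_polar_pt (σ ν y θ : ℝ) (hσ : 0 < σ) :
    y * (gaussianPDFReal ν ⟨σ^2, sq_nonneg σ⟩ (y * Real.cos θ) *
      gaussianPDFReal 0 ⟨σ^2, sq_nonneg σ⟩ (y * Real.sin θ)) =
    ((y / σ ^ 2) * Real.exp (-(y ^ 2 + ν ^ 2) / (2 * σ ^ 2)) * (1/(2*Real.pi))) *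
      Real.exp ((y * ν / σ ^ 2) * Real.cos θ) := by
  have hπ := Real.pi_pos
  have h2 : Real.sqrt (2*π*σ^2) * Real.sqrt (2*π*σ^2) = 2*π*σ^2 :=
    Real.mul_self_sqrt (by positivity)
  have hnum : (y * Real.cos θ - ν) ^ 2 + (y * Real.sin θ - 0) ^ 2
      = y ^ 2 + ν ^ 2 - 2 * (y * ν * Real.cos θ) := by
    linear_combination y ^ 2 * (Real.sin_sq_add_cos_sq θ)
  have hexp : Real.exp (-(y * Real.cos θ - ν) ^ 2 / (2 * σ^2)) *
      Real.exp (-(y * Real.sin θ - 0) ^ 2 / (2 * σ^2))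
      = Real.exp (-(y ^ 2 + ν ^ 2) / (2 * σ ^ 2)) * Real.exp ((y * ν / σ ^ 2) * Real.cos θ) := by
    rw [← Real.exp_add, ← Real.exp_add, ← add_div, ← neg_add, hnum]
    congr 1
    field_simp
    ring
  calc y * ((√(2*π*σ^2))⁻¹ * Real.exp (-(y * Real.cos θ - ν) ^ 2 / (2 * σ^2)) *
        ((√(2*π*σ^2))⁻¹ * Real.exp (-(y * Real.sin θ - 0) ^ 2 / (2 * σ^2))))
      = (√(2*π*σ^2) * √(2*π*σ^2))⁻¹ * y *
        (Real.exp (-(y * Real.cos θ - ν) ^ 2 / (2 * σ^2)) *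
         Real.exp (-(y * Real.sin θ - 0) ^ 2 / (2 * σ^2))) := by
        rw [mul_inv]; ring
    _ = (2*π*σ^2)⁻¹ * y *
        (Real.exp (-(y ^ 2 + ν ^ 2) / (2 * σ ^ 2)) * Real.exp ((y * ν / σ ^ 2) * Real.cos θ)) := by
        rw [h2, hexp]
    _ = ((y / σ ^ 2) * Real.exp (-(y ^ 2 + ν ^ 2) / (2 * σ ^ 2)) * (1/(2*Real.pi))) *
      Real.exp ((y * ν / σ ^ 2) * Real.cos θ) := by
        field_simp

lemma lintegral_ricePDF (σ ν : ℝ) (hσ : 0 < σ) :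
    ∫⁻ u in Set.Ioi (0:ℝ), ENNReal.ofReal (ricePDF σ ν u) = 1 := by
  have hπ := Real.pi_pos
  set V : ℝ≥0 := ⟨σ ^ 2, sq_nonneg σ⟩ with hVdef
  have hV0 : V ≠ 0 := by
    intro h
    have h' : σ ^ 2 = (0:ℝ) := by
      rw [show σ ^ 2 = (V:ℝ) from rfl, h, NNReal.coe_zero]
    nlinarith
  set G : ℝ × ℝ → ℝ := fun p => gaussianPDFReal ν V p.1 * gaussianPDFReal 0 V p.2 with hGdef
  have hGc : Continuous G := by
    unfold G
    unfold gaussianPDFReal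
    fun_prop
  have hGnn : ∀ p, 0 ≤ G p :=
    fun p => mul_nonneg (gaussianPDFReal_nonneg _ _ _) (gaussianPDFReal_nonneg _ _ _)
  have h2d : ∫⁻ p : ℝ × ℝ, ENNReal.ofReal (G p) = 1 := by
    have hpt : ∀ p : ℝ × ℝ, ENNReal.ofReal (G p)
        = ENNReal.ofReal (gaussianPDFReal ν V p.1) * ENNReal.ofReal (gaussianPDFReal 0 V p.2) :=
      fun p => ENNReal.ofReal_mul (gaussianPDFReal_nonneg _ _ _)
    simp_rw [hpt]
    rw [Measure.volume_eq_prod, lintegral_prod_mul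
      ((measurable_gaussianPDFReal _ _).ennreal_ofReal.aemeasurable)
      ((measurable_gaussianPDFReal _ _).ennreal_ofReal.aemeasurable),
      lintegral_gaussianPDFReal_eq_one _ hV0, lintegral_gaussianPDFReal_eq_one _ hV0, one_mul]
  rw [← lintegral_comp_polarCoord_symm] at h2d
  simp only [smul_eq_mul] at h2d
  have htarget : polarCoord.target = Set.Ioi (0:ℝ) ×ˢ Set.Ioo (-π) π := rfl
  have hsymmc : Continuous fun p : ℝ × ℝ => (polarCoord.symm p : ℝ × ℝ) := by
    have : (fun p : ℝ × ℝ => (polarCoord.symm p : ℝ × ℝ))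
        = fun p : ℝ × ℝ => (p.1 * Real.cos p.2, p.1 * Real.sin p.2) := rfl
    rw [this]; fun_prop
  have hmeas : Measurable fun p : ℝ × ℝ =>
      ENNReal.ofReal p.1 * ENNReal.ofReal (G (polarCoord.symm p)) :=
    (measurable_fst.ennreal_ofReal).mul ((hGc.comp hsymmc).measurable.ennreal_ofReal)
  rw [htarget, Measure.volume_eq_prod, ← Measure.prod_restrict, lintegral_prod _ hmeas.aemeasurable]
    at h2d
  have hinner : ∀ y ∈ Set.Ioi (0:ℝ),
      (∫⁻ θ in Set.Ioo (-π) π, ENNReal.ofReal y * ENNReal.ofReal (G (polarCoord.symm (y, θ))))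
        = ENNReal.ofReal (ricePDF σ ν y) := by
    intro y hy
    have hy0 : (0:ℝ) ≤ y := (le_of_lt hy)
    have hid : ∀ θ : ℝ, ENNReal.ofReal y * ENNReal.ofReal (G (polarCoord.symm (y, θ)))
        = ENNReal.ofReal (y * G (y * Real.cos θ, y * Real.sin θ)) := by
      intro θ
      rw [← ENNReal.ofReal_mul hy0]
      rfl
    simp_rw [hid]
    have hcont : Continuous fun θ : ℝ => y * G (y * Real.cos θ, y * Real.sin θ) := by
      fun_prop
    have hint : IntegrableOn (fun θ : ℝ => y * G (y * Real.cos θ, y * Real.sin θ))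
        (Set.Ioo (-π) π) :=
      (hcont.integrableOn_Icc).mono_set Set.Ioo_subset_Icc_self
    rw [← ofReal_integral_eq_lintegral_ofReal hint ?nn]
    case nn =>
      filter_upwards with θ
      exact mul_nonneg hy0 (hGnn _)
    congr 1
    have hpt : ∀ θ : ℝ, y * G (y * Real.cos θ, y * Real.sin θ)
        = ((y / σ ^ 2) * Real.exp (-(y ^ 2 + ν ^ 2) / (2 * σ ^ 2)) * (1/(2*Real.pi))) *
            Real.exp ((y * ν / σ ^ 2) * Real.cos θ) :=
      fun θ => gauss_polar_pt σ ν y θ hσ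
    simp_rw [hpt]
    rw [← integral_Ioc_eq_integral_Ioo,
      ← intervalIntegral.integral_of_le (by linarith : -π ≤ π),
      intervalIntegral.integral_const_mul, integral_exp_cos]
    unfold ricePDF
    field_simp
  rw [setLIntegral_congr_fun measurableSet_Ioi hinner] at h2d
  exact h2d



lemma ricePDF_cont1 (σ ν : ℝ) : Continuous fun u => ricePDF σ ν u :=
  (ricePDF_continuous σ).comp (continuous_const.prodMk continuous_id)

lemma integrableOn_ricePDF (σ ν : ℝ) (hσ : 0 < σ) :
    IntegrableOn (ricePDF σ ν) (Set.Ioi (0:ℝ)) := by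
  have hnn : 0 ≤ᵐ[volume.restrict (Set.Ioi (0:ℝ))] ricePDF σ ν := by
    rw [Filter.EventuallyLE, ae_restrict_iff' measurableSet_Ioi]
    filter_upwards with u hu
    exact ricePDF_nonneg σ ν u (le_of_lt hu) hσ
  constructor
  · exact (ricePDF_cont1 σ ν).aestronglyMeasurable
  · rw [hasFiniteIntegral_iff_ofReal hnn, lintegral_ricePDF σ ν hσ]
    exact ENNReal.one_lt_top

lemma setIntegral_ricePDF (σ ν : ℝ) (hσ : 0 < σ) :
    ∫ u in Set.Ioi (0:ℝ), ricePDF σ ν u = 1 := by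
  rw [integral_eq_lintegral_of_nonneg_ae ?nn (ricePDF_cont1 σ ν).aestronglyMeasurable,
    lintegral_ricePDF σ ν hσ, ENNReal.toReal_one]
  case nn =>
    rw [Filter.EventuallyLE, ae_restrict_iff' measurableSet_Ioi]
    filter_upwards with u hu
    exact ricePDF_nonneg σ ν u (le_of_lt hu) hσ

lemma marcumQ_eq (σ ν r : ℝ) (hσ : 0 < σ) :
    marcumQ (ν / σ) (r / σ) = ∫ u in Set.Ioi r, ricePDF σ ν u := by
  have hσ' : σ ≠ 0 := ne_of_gt hσ
  have key : ∀ y : ℝ, y * Real.exp (-(y ^ 2 + (ν/σ) ^ 2) / 2) * besselI0 ((ν/σ) * y)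
      = σ * ricePDF σ ν (σ * y) := by
    intro y
    unfold ricePDF
    have h1 : σ * y * ν / σ ^ 2 = ν / σ * y := by field_simp
    have h2 : -((σ*y)^2 + ν^2)/(2*σ^2) = -(y^2 + (ν/σ)^2)/2 := by field_simp
    rw [h1, h2]
    field_simp
  unfold marcumQ
  simp_rw [key]
  rw [integral_const_mul, integral_comp_mul_left_Ioi (ricePDF σ ν) (r/σ) hσ,
    mul_div_cancel₀ _ hσ', smul_eq_mul, ← mul_assoc, mul_inv_cancel₀ hσ', one_mul]

lemma one_sub_marcumQ (σ ν r : ℝ) (hσ : 0 < σ) (hr : 0 ≤ r) :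
    1 - marcumQ (ν / σ) (r / σ) = ∫ u in Set.Ioc 0 r, ricePDF σ ν u := by
  have hsplit : ∫ u in Set.Ioi (0:ℝ), ricePDF σ ν u
      = (∫ u in Set.Ioc 0 r, ricePDF σ ν u) + ∫ u in Set.Ioi r, ricePDF σ ν u := by
    rw [← setIntegral_union (Set.Ioc_disjoint_Ioi le_rfl) measurableSet_Ioi
      ((integrableOn_ricePDF σ ν hσ).mono_set Set.Ioc_subset_Ioi_self)
      ((integrableOn_ricePDF σ ν hσ).mono_set (Set.Ioi_subset_Ioi hr)),
      Set.Ioc_union_Ioi_eq_Ioi hr]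
  rw [setIntegral_ricePDF σ ν hσ] at hsplit
  rw [marcumQ_eq σ ν r hσ]
  linarith

lemma marcumQ_le_one (σ ν r : ℝ) (hσ : 0 < σ) (hr : 0 ≤ r) :
    marcumQ (ν / σ) (r / σ) ≤ 1 := by
  have h := one_sub_marcumQ σ ν r hσ hr
  have h2 : 0 ≤ ∫ u in Set.Ioc 0 r, ricePDF σ ν u :=
    setIntegral_nonneg measurableSet_Ioc fun u hu => ricePDF_nonneg σ ν u (le_of_lt hu.1) hσ
  linarith

lemma lintegral_rice_swap (σ u : ℝ) (hσ : 0 < σ) (hu : 0 < u) :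
    ∫⁻ v in Set.Ioi (0:ℝ), ENNReal.ofReal (ricePDF σ v u * v) = ENNReal.ofReal u := by
  have hpt : ∀ v : ℝ, ricePDF σ v u * v = u * ricePDF σ u v := by
    intro v
    unfold ricePDF
    have h1 : v * u / σ ^ 2 = u * v / σ ^ 2 := by ring
    have h2 : -(v ^ 2 + u ^ 2) / (2 * σ ^ 2) = -(u ^ 2 + v ^ 2) / (2 * σ ^ 2) := by ring
    rw [h1, h2]
    ring
  simp_rw [hpt, ENNReal.ofReal_mul hu.le]
  rw [lintegral_const_mul' _ _ ENNReal.ofReal_ne_top, lintegral_ricePDF σ u hσ, mul_one]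

theorem contact_cdf_upper_bound (lp m σ r : ℝ) (hlp : 0 < lp) (hm : 0 < m)
    (hσ : 0 < σ) (hr : 0 ≤ r) :
    1 - Real.exp (-2 * Real.pi * lp *
        ∫ v in Set.Ioi (0:ℝ),
          (1 - Real.exp (-m * (1 - marcumQ (v / σ) (r / σ)))) * v) ≤
      1 - Real.exp (-Real.pi * lp * m * r ^ 2) := by
  have hπ := Real.pi_pos
  set g : ℝ → ℝ := fun v => (1 - Real.exp (-m * (1 - marcumQ (v / σ) (r / σ)))) * v with hg
  -- continuity of g
  have hQ : ∀ v : ℝ, marcumQ (v / σ) (r / σ) = 1 - ∫ u in Set.Icc 0 r, ricePDF σ v u := by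
    intro v
    have := one_sub_marcumQ σ v r hσ hr
    rw [← integral_Icc_eq_integral_Ioc] at this
    linarith
  have hcontI : Continuous fun v : ℝ => ∫ u in Set.Icc 0 r, ricePDF σ v u :=
    continuous_parametric_integral_of_continuous (f := fun v u => ricePDF σ v u)
      (by exact ricePDF_continuous σ) isCompact_Icc
  have hgc : Continuous g := by
    have : g = fun v => (1 - Real.exp (-m * (∫ u in Set.Icc 0 r, ricePDF σ v u))) * v := by
      funext v
      rw [hg]
      simp only [hQ v]
      ring_nf
    rw [this]
    fun_prop
  -- key bound on the lintegral
  have hkey : ∫⁻ v in Set.Ioi (0:ℝ), ENNReal.ofReal (g v)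
      ≤ ENNReal.ofReal (m * r ^ 2 / 2) := by
    have step1 : ∫⁻ v in Set.Ioi (0:ℝ), ENNReal.ofReal (g v)
        ≤ ∫⁻ v in Set.Ioi (0:ℝ),
            ENNReal.ofReal (m * v * ∫ u in Set.Ioc 0 r, ricePDF σ v u) := by
      apply lintegral_mono_ae
      rw [ae_restrict_iff' measurableSet_Ioi]
      filter_upwards with v hv
      apply ENNReal.ofReal_le_ofReal
      have hexp : 1 - Real.exp (-m * (1 - marcumQ (v / σ) (r / σ)))
          ≤ m * (1 - marcumQ (v / σ) (r / σ)) := by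
        have := Real.add_one_le_exp (-(m * (1 - marcumQ (v / σ) (r / σ))))
        have h2 : -m * (1 - marcumQ (v / σ) (r / σ)) = -(m * (1 - marcumQ (v / σ) (r / σ))) := by
          ring
        rw [h2]
        linarith
      calc g v ≤ m * (1 - marcumQ (v / σ) (r / σ)) * v :=
            mul_le_mul_of_nonneg_right hexp (le_of_lt hv)
        _ = m * v * ∫ u in Set.Ioc 0 r, ricePDF σ v u := by
            rw [one_sub_marcumQ σ v r hσ hr]; ring
    refine le_trans step1 ?_
    -- convert the inner integral to a lintegral
    have step2 : ∀ v ∈ Set.Ioi (0:ℝ),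
        ENNReal.ofReal (m * v * ∫ u in Set.Ioc 0 r, ricePDF σ v u)
          = ∫⁻ u in Set.Ioc 0 r, ENNReal.ofReal (m * v * ricePDF σ v u) := by
      intro v hv
      have hint : IntegrableOn (fun u => m * v * ricePDF σ v u) (Set.Ioc 0 r) :=
        ((continuous_const.mul (ricePDF_cont1 σ v)).integrableOn_Icc).mono_set
          Set.Ioc_subset_Icc_self
      rw [← integral_const_mul]
      rw [ofReal_integral_eq_lintegral_ofReal hint ?nn]
      case nn =>
        rw [Filter.EventuallyLE, ae_restrict_iff' measurableSet_Ioc]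
        filter_upwards with u hu
        exact mul_nonneg (mul_nonneg hm.le (le_of_lt hv))
          (ricePDF_nonneg σ v u (le_of_lt hu.1) hσ)
    rw [setLIntegral_congr_fun measurableSet_Ioi step2]
    -- Tonelli
    have hmeas : Measurable fun p : ℝ × ℝ => ENNReal.ofReal (m * p.2 * ricePDF σ p.2 p.1) := by
      apply Measurable.ennreal_ofReal
      have : Continuous fun p : ℝ × ℝ => ricePDF σ p.2 p.1 :=
        (ricePDF_continuous σ).comp (continuous_snd.prodMk continuous_fst)
      exact ((continuous_const.mul continuous_snd).mul this).measurable
    rw [← lintegral_lintegral_swap (f := fun u v => ENNReal.ofReal (m * v * ricePDF σ v u))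
      (by exact hmeas.aemeasurable)]
    -- inner integral over v
    have step3 : ∀ u ∈ Set.Ioc (0:ℝ) r,
        (∫⁻ v in Set.Ioi (0:ℝ), ENNReal.ofReal (m * v * ricePDF σ v u))
          = ENNReal.ofReal (m * u) := by
      intro u hu
      have hpt : ∀ v : ℝ, ENNReal.ofReal (m * v * ricePDF σ v u)
          = ENNReal.ofReal m * ENNReal.ofReal (ricePDF σ v u * v) := by
        intro v
        rw [← ENNReal.ofReal_mul hm.le]
        congr 1
        ring
      simp_rw [hpt]
      rw [lintegral_const_mul' _ _ ENNReal.ofReal_ne_top, lintegral_rice_swap σ u hσ hu.1,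
        ← ENNReal.ofReal_mul hm.le]
    rw [setLIntegral_congr_fun measurableSet_Ioc step3]
    -- compute the final integral
    have hfin : ∫⁻ u in Set.Ioc (0:ℝ) r, ENNReal.ofReal (m * u)
        = ENNReal.ofReal (m * r ^ 2 / 2) := by
      rw [← ofReal_integral_eq_lintegral_ofReal ?int ?nn]
      case int =>
        exact ((continuous_const.mul continuous_id).integrableOn_Icc).mono_set
          Set.Ioc_subset_Icc_self
      case nn =>
        rw [Filter.EventuallyLE, ae_restrict_iff' measurableSet_Ioc]
        filter_upwards with u hu
        exact mul_nonneg hm.le (le_of_lt hu.1)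
      congr 1
      rw [← intervalIntegral.integral_of_le hr, intervalIntegral.integral_const_mul,
        integral_id]
      ring
    rw [hfin]
  -- from the lintegral bound to the Bochner integral bound
  have hgnn : 0 ≤ᵐ[volume.restrict (Set.Ioi (0:ℝ))] g := by
    rw [Filter.EventuallyLE, ae_restrict_iff' measurableSet_Ioi]
    filter_upwards with v hv
    have hQ1 : marcumQ (v / σ) (r / σ) ≤ 1 := marcumQ_le_one σ v r hσ hr
    have : Real.exp (-m * (1 - marcumQ (v / σ) (r / σ))) ≤ 1 := by
      rw [Real.exp_le_one_iff]
      nlinarith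
    have h1 : 0 ≤ 1 - Real.exp (-m * (1 - marcumQ (v / σ) (r / σ))) := by linarith
    exact mul_nonneg h1 (le_of_lt hv)
  have hIeq : ∫ v in Set.Ioi (0:ℝ), g v
      = (∫⁻ v in Set.Ioi (0:ℝ), ENNReal.ofReal (g v)).toReal :=
    integral_eq_lintegral_of_nonneg_ae hgnn hgc.aestronglyMeasurable
  have hIle : ∫ v in Set.Ioi (0:ℝ), g v ≤ m * r ^ 2 / 2 := by
    rw [hIeq]
    exact ENNReal.toReal_le_of_le_ofReal (by positivity) hkey
  -- conclude
  have harg : -Real.pi * lp * m * r ^ 2 ≤ -2 * Real.pi * lp * ∫ v in Set.Ioi (0:ℝ), g v := by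
    nlinarith [hIle, mul_pos hπ hlp]
  have := Real.exp_le_exp.mpr harg
  linarith
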